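/- Let f : S → ℝ₊ be weakly monotone and strongly submodular, let o be optimal with |o| ≤ k and f(o) = OPT. Then for any sequence s there exists a sequence s' obtained from s by inserting one item of V into some position of s (so s is a subsequence of s' and |s'| = |s| + 1) with f(s') − f(s) ≥ (OPT − f(s))/k. -/

import Mathlib

lemma sublist_decomp {V : Type*} : ∀ {s t : List V}, s.Sublist t → s ≠ t →
    ∃ (a : List V) (v : V) (b s₁ : List V),
      t = a ++ v :: b ∧ s = s₁ ++ b ∧ s₁.Sublist a := by
  intro s t h
  induction h with
  | slnil => intro h; exact absurd rfl h
  | @cons l₁ l₂ v h ih =>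
    intro _
    by_cases hst : l₁ = l₂
    · exact ⟨[], v, l₂, [], rfl, by simp [hst], List.nil_sublist _⟩
    · obtain ⟨a, u, b, s₁, ht, hs, hsub⟩ := ih hst
      exact ⟨v :: a, u, b, s₁, by simp [ht], hs, hsub.cons v⟩
  | @cons_cons l₁ l₂ v h ih =>
    intro hne
    have hst : l₁ ≠ l₂ := fun h' => hne (by rw [h'])
    obtain ⟨a, u, b, s₁, ht, hs, hsub⟩ := ih hst
    exact ⟨v :: a, u, b, v :: s₁, by simp [ht], by simp [hs], hsub.cons₂ v⟩

lemma telescope {V : Type*} (f : List V → ℝ)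
    (hstrong : ∀ (s t o : List V) (v : V), s.Sublist t →
      f (t ++ [v] ++ o) - f (t ++ o) ≤ f (s ++ [v] ++ o) - f (s ++ o))
    (s : List V) (c : ℝ)
    (hc : ∀ s' : List V, s.Sublist s' → s'.length = s.length + 1 → f s' - f s < c) :
    ∀ (n : ℕ) (t : List V), s.Sublist t → t.length = s.length + n → 1 ≤ n →
      f t - f s < n * c := by
  intro n
  induction n with
  | zero => intro t _ _ h; omega
  | succ n ih =>
    intro t hst hlen _
    rcases Nat.eq_zero_or_pos n with hn | hn
    · subst hn
      have := hc t hst (by omega)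
      simpa using this
    · have hne : s ≠ t := by
        intro h; rw [h] at hlen; omega
      obtain ⟨a, v, b, s₁, ht, hs, hsub⟩ := sublist_decomp hst hne
      have hst0 : s.Sublist (a ++ b) := by
        rw [hs]; exact hsub.append (List.Sublist.refl b)
      have hlen0 : (a ++ b).length = s.length + n := by
        have : t.length = (a ++ b).length + 1 := by simp [ht]; omega
        omega
      have h1 : f t - f (a ++ b) ≤ f (s₁ ++ v :: b) - f s := by
        have := hstrong s₁ a b v hsub
        rw [hs, ht]
        simpa using this
      have h2 : f (s₁ ++ v :: b) - f s < c := by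
        apply hc
        · rw [hs]
          exact ((b.sublist_cons_self v).append_left s₁ : _)
        · rw [hs]; simp; omega
      have h3 : f (a ++ b) - f s < n * c := ih _ hst0 hlen0 hn
      push_cast
      nlinarith

/-- For a weakly monotone, strongly submodular, nonnegative sequence
function `f` and an optimal sequence `o` with `|o| ≤ k` and `f o = OPT`, for any
sequence `s` there is a sequence `s'` obtained from `s` by inserting one item
(so `s` is a subsequence of `s'` and `|s'| = |s| + 1`) with
`f s' − f s ≥ (OPT − f s)/k`. -/
theorem exists_insertion_gain_ge {V : Type*} [Nonempty V] (f : List V → ℝ)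
    (hnonneg : ∀ s : List V, 0 ≤ f s)
    (hweak : ∀ s t : List V, ∃ w : List V, s.Sublist w ∧ t.Sublist w ∧
      w.length ≤ s.length + t.length ∧ f s ≤ f w)
    (hstrong : ∀ (s t o : List V) (v : V), s.Sublist t →
      f (t ++ [v] ++ o) - f (t ++ o) ≤ f (s ++ [v] ++ o) - f (s ++ o))
    (k : ℕ) (hk : 1 ≤ k) (o : List V) (ho : o.length ≤ k)
    (hopt : ∀ t : List V, t.length ≤ k → f t ≤ f o)
    (s : List V) :
    ∃ s' : List V, s.Sublist s' ∧ s'.length = s.length + 1 ∧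
      (f o - f s) / k ≤ f s' - f s := by
  by_contra hcon
  push_neg at hcon
  set c : ℝ := (f o - f s) / k with hc_def
  have hc : ∀ s' : List V, s.Sublist s' → s'.length = s.length + 1 → f s' - f s < c := by
    intro s' h1 h2; exact hcon s' h1 h2
  have hkpos : (0:ℝ) < (k:ℝ) := by exact_mod_cast hk
  have hkc : (k:ℝ) * c = f o - f s := by
    rw [hc_def]; field_simp
  have key := telescope f hstrong s c hc
  rcases le_or_gt c 0 with hcle | hcpos
  · -- c ≤ 0 : use hweak s (s ++ [v])
    obtain ⟨v⟩ := ‹Nonempty V›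
    obtain ⟨w, hsw, htw, hwl, hfw⟩ := hweak s (s ++ [v])
    have hwge : s.length + 1 ≤ w.length := by
      have := htw.length_le
      simp at this; omega
    have hm : 1 ≤ w.length - s.length := by omega
    have hlen : w.length = s.length + (w.length - s.length) := by omega
    have hbound := key (w.length - s.length) w hsw hlen hm
    have hmc : ((w.length - s.length : ℕ) : ℝ) * c ≤ 1 * c := by
      apply mul_le_mul_of_nonpos_right _ hcle
      exact_mod_cast hm
    linarith
  · -- c > 0 : use hweak o s
    obtain ⟨w, how, hsw, hwl, hfw⟩ := hweak o s
    have hmk : w.length - s.length ≤ k := by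
      have := hsw.length_le
      omega
    rcases Nat.eq_or_lt_of_le hsw.length_le with heq | hlt
    · have : s = w := hsw.eq_of_length heq
      rw [← this] at hfw
      have : f o - f s ≤ 0 := by linarith
      nlinarith
    · have hm : 1 ≤ w.length - s.length := by omega
      have hlen : w.length = s.length + (w.length - s.length) := by omega
      have hbound := key (w.length - s.length) w hsw hlen hm
      have hmc : ((w.length - s.length : ℕ) : ℝ) * c ≤ (k:ℝ) * c := by
        apply mul_le_mul_of_nonneg_right _ (le_of_lt hcpos)
        exact_mod_cast hmk
      linarith
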